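/- arXiv:2410.04395 — 2 statements merged into one kernel-verified Lean document; each statement's English description precedes it below -/
import Mathlib

section
/- Let φ : ℝ → ℝ be a monotone decreasing nonnegative function such that for some constants δ > 0, C₀ > 0, s₀ ∈ ℝ, one has t·φ(s+t) ≤ C₀·φ(s)^(1+δ) for all s ≥ s₀ and all t > 0. Then φ(s) = 0 for every s ≥ s₀ + 2C₀φ(s₀)^δ/(1 − 2^(−δ)). -/
/-- De Giorgi iteration lemma. -/
theorem deGiorgi_iteration (φ : ℝ → ℝ) (hanti : Antitone φ) (hnonneg : ∀ s, 0 ≤ φ s)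
    (δ C₀ s₀ : ℝ) (hδ : 0 < δ) (hC₀ : 0 < C₀)
    (hiter : ∀ s ≥ s₀, ∀ t > 0, t * φ (s + t) ≤ C₀ * φ s ^ (1 + δ)) :
    ∀ s ≥ s₀ + 2 * C₀ * φ s₀ ^ δ / (1 - 2 ^ (-δ)), φ s = 0 := by
  intro s hs
  have hr0 : (0:ℝ) < (2:ℝ) ^ (-δ) := Real.rpow_pos_of_pos two_pos _
  have hr1 : (2:ℝ) ^ (-δ) < 1 :=
    Real.rpow_lt_one_of_one_lt_of_neg one_lt_two (by linarith)
  set r : ℝ := (2:ℝ) ^ (-δ) with hrdef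
  have hden : 0 < 1 - r := by linarith
  by_cases h0 : φ s₀ = 0
  · have hs0 : s₀ ≤ s := by
      have hz : 2 * C₀ * φ s₀ ^ δ / (1 - r) = 0 := by
        rw [h0, Real.zero_rpow (ne_of_gt hδ)]; ring
      rw [hz] at hs; linarith
    exact le_antisymm (h0 ▸ hanti hs0) (hnonneg s)
  · have hφ0 : 0 < φ s₀ := lt_of_le_of_ne (hnonneg s₀) (Ne.symm h0)
    have hφδ : 0 < φ s₀ ^ δ := Real.rpow_pos_of_pos hφ0 _
    set T : ℝ := 2 * C₀ * φ s₀ ^ δ with hT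
    have hTpos : 0 < T := by positivity
    set a : ℕ → ℝ := fun n => s₀ + T * (1 - r ^ n) / (1 - r) with ha
    have hrn0 : ∀ n : ℕ, (0:ℝ) < r ^ n := fun n => pow_pos hr0 n
    have hrn1 : ∀ n : ℕ, r ^ n ≤ 1 := fun n => pow_le_one₀ hr0.le hr1.le
    have ha0 : ∀ n, s₀ ≤ a n := by
      intro n
      have h1 : 0 ≤ T * (1 - r ^ n) / (1 - r) :=
        div_nonneg (mul_nonneg hTpos.le (by linarith [hrn1 n])) hden.le
      simp only [ha]; linarith
    have hasucc : ∀ n, a (n + 1) = a n + T * r ^ n := by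
      intro n
      simp only [ha, pow_succ]
      field_simp
      ring
    have hrn : ∀ n : ℕ, r ^ n = ((2:ℝ) ^ n) ^ (-δ) := by
      intro n
      rw [hrdef, ← Real.rpow_natCast ((2:ℝ) ^ (-δ)) n, ← Real.rpow_natCast 2 n,
        ← Real.rpow_mul (by norm_num), ← Real.rpow_mul (by norm_num)]
      ring_nf
    have key : ∀ n : ℕ, φ (a n) ≤ φ s₀ / 2 ^ n := by
      intro n
      induction n with
      | zero => simp [ha]
      | succ n ih =>
        have h2n : (0:ℝ) < 2 ^ n := by positivity
        have h2nδ : (0:ℝ) < ((2:ℝ) ^ n) ^ δ := Real.rpow_pos_of_pos h2n _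
        have hstep := hiter (a n) (ha0 n) (T * r ^ n) (by positivity)
        rw [← hasucc n] at hstep
        have hmono : φ (a n) ^ (1 + δ) ≤ (φ s₀ / 2 ^ n) ^ (1 + δ) :=
          Real.rpow_le_rpow (hnonneg _) ih (by linarith)
        have heq : C₀ * (φ s₀ / 2 ^ n) ^ (1 + δ) = T * r ^ n * (φ s₀ / 2 ^ (n + 1)) := by
          rw [Real.div_rpow (hnonneg _) h2n.le,
            Real.rpow_add hφ0, Real.rpow_add h2n, Real.rpow_one, Real.rpow_one,
            hT, hrn n, Real.rpow_neg h2n.le, pow_succ]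
          field_simp
        have hle : T * r ^ n * φ (a (n + 1)) ≤ T * r ^ n * (φ s₀ / 2 ^ (n + 1)) := by
          calc T * r ^ n * φ (a (n + 1)) ≤ C₀ * φ (a n) ^ (1 + δ) := hstep
            _ ≤ C₀ * (φ s₀ / 2 ^ n) ^ (1 + δ) := by nlinarith
            _ = T * r ^ n * (φ s₀ / 2 ^ (n + 1)) := heq
        have hpos : (0:ℝ) < T * r ^ n := by positivity
        exact le_of_mul_le_mul_left hle hpos
    have haS : ∀ n, a n ≤ s := by
      intro n
      have h1 : T * (1 - r ^ n) / (1 - r) ≤ T / (1 - r) :=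
        (div_le_div_iff_of_pos_right hden).mpr (by nlinarith [hrn0 n])
      have : a n ≤ s₀ + T / (1 - r) := by simp only [ha]; linarith [h1]
      calc a n ≤ s₀ + T / (1 - r) := this
        _ ≤ s := hs
    have hφs : ∀ n : ℕ, φ s ≤ φ s₀ / 2 ^ n := fun n => (hanti (haS n)).trans (key n)
    have htend : Filter.Tendsto (fun n : ℕ => φ s₀ / 2 ^ n) Filter.atTop (nhds 0) := by
      have := tendsto_pow_atTop_nhds_zero_of_lt_one (by norm_num : (0:ℝ) ≤ 1/2)
        (by norm_num : (1:ℝ)/2 < 1)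
      have h := this.const_mul (φ s₀)
      simp only [mul_zero] at h
      convert h using 2 with n
      rw [div_pow, one_pow]
      ring
    have hle0 : φ s ≤ 0 := ge_of_tendsto' htend hφs
    exact le_antisymm hle0 (hnonneg s)
end

section
/- Let u : B₁ → ℝ be a C² function on the unit ball of ℝ^(2n) ≅ ℂⁿ. At any point where the full real Hessian ∇²u is negative semidefinite, one has |det(∇²u)| ≤ 2^(2n)·(det(−u_{ij̄}))², where (u_{ij̄}) is the complex Hessian. -/
open scoped ComplexOrder
open Matrix
open scoped MatrixOrder

lemma Matrix.posSemidef_iff_eq_transpose_mul_self {𝕜 : Type*} [RCLike 𝕜] {n : Type*} [Fintype n]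
    [DecidableEq n] {A : Matrix n n 𝕜} : A.PosSemidef ↔ ∃ B : Matrix n n 𝕜, A = Bᴴ * B :=
  ⟨fun h => by
    obtain ⟨B, hB⟩ := CStarAlgebra.nonneg_iff_eq_star_mul_self.mp h.nonneg
    exact ⟨B, hB⟩, fun ⟨B, hB⟩ => hB ▸ posSemidef_conjTranspose_mul_self B⟩

namespace HessAux

variable {m : Type*} [Fintype m] [DecidableEq m]

lemma psd_det_eq_re (A : Matrix m m ℂ) (hA : A.PosSemidef) :
    A.det = (A.det.re : ℂ) ∧ 0 ≤ A.det.re := by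
  obtain ⟨B, rfl⟩ := posSemidef_iff_eq_transpose_mul_self.mp hA
  rw [det_mul, det_conjTranspose]
  constructor
  · simp [mul_comm, Complex.mul_conj]
  · simp [mul_comm, Complex.mul_conj, Complex.normSq_nonneg]

lemma psd_posdef_or (A : Matrix m m ℂ) (hA : A.PosSemidef) : A.PosDef ∨ A.det = 0 := by
  by_cases h : A.PosDef
  · exact Or.inl h
  right
  rw [posDef_iff_dotProduct_mulVec] at h
  push_neg at h
  obtain ⟨x, hx, hlt⟩ := h hA.1
  have h0 : star x ⬝ᵥ A *ᵥ x = 0 := ((hA.dotProduct_mulVec_nonneg x).eq_or_lt.resolve_right hlt).symm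
  have := (hA.dotProduct_mulVec_zero_iff x).mp h0
  exact (Matrix.exists_mulVec_eq_zero_iff).mp ⟨x, hx, this⟩

lemma one_le_det_one_add (Q : Matrix m m ℂ) (hQ : Q.PosSemidef) :
    (1 : ℝ) ≤ (1 + Q).det.re ∧ (1 + Q).det = (((1 + Q).det.re : ℝ) : ℂ) := by
  have hst := hQ.1.spectral_theorem; rw [Unitary.conjStarAlgAut_apply] at hst
  set V : Matrix m m ℂ := (hQ.1.eigenvectorUnitary : Matrix m m ℂ) with hV
  set D : Matrix m m ℂ := diagonal (RCLike.ofReal ∘ hQ.1.eigenvalues) with hD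
  have hVV : V * star V = 1 := (Matrix.mem_unitaryGroup_iff).mp hQ.1.eigenvectorUnitary.2
  have h1 : (1 : Matrix m m ℂ) + Q = V * ((1 + D) * star V) := by
    rw [add_mul, one_mul, mul_add, hVV, ← mul_assoc, ← hst]
  have hdet1 : (1 + Q).det = (1 + D).det := by
    rw [h1, det_mul, det_mul]
    have h2 : V.det * (star V).det = 1 := by rw [← det_mul, hVV, det_one]
    calc V.det * ((1 + D).det * (star V).det)
        = (1 + D).det * (V.det * (star V).det) := by ring
      _ = (1 + D).det := by rw [h2, mul_one]
  have h3 : (1 : Matrix m m ℂ) + D = diagonal (fun i => 1 + (hQ.1.eigenvalues i : ℂ)) := by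
    rw [hD, ← diagonal_one, diagonal_add]
    congr 1
  have h4 : (1 + Q).det = ((∏ i, (1 + hQ.1.eigenvalues i) : ℝ) : ℂ) := by
    rw [hdet1, h3, det_diagonal]
    push_cast
    rfl
  have h5 : (1 : ℝ) ≤ ∏ i, (1 + hQ.1.eigenvalues i) := by
    calc (1 : ℝ) = ∏ _i : m, (1 : ℝ) := by simp
      _ ≤ ∏ i, (1 + hQ.1.eigenvalues i) :=
        Finset.prod_le_prod (fun i _ => zero_le_one)
          (fun i _ => by linarith [hQ.eigenvalues_nonneg i])
  constructor
  · rw [h4, Complex.ofReal_re]; exact h5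
  · rw [h4, Complex.ofReal_re]

lemma det_re_le_det_re_add (A B : Matrix m m ℂ) (hA : A.PosSemidef) (hB : B.PosSemidef) :
    A.det.re ≤ (A + B).det.re := by
  rcases psd_posdef_or A hA with hPD | h0
  · set S : Matrix m m ℂ := CFC.sqrt A with hS
    have hSpsd : S.PosSemidef := (CFC.sqrt_nonneg A).posSemidef
    have hSS : S * S = A := CFC.sqrt_mul_sqrt_self A hA.nonneg
    have hSdet : S.det ≠ 0 := by
      intro h
      have : A.det = 0 := by rw [← hSS, det_mul, h, zero_mul]
      exact hPD.det_pos.ne' this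
    have hSunit : IsUnit S.det := hSdet.isUnit
    have hSinv : S * S⁻¹ = 1 := mul_nonsing_inv S hSunit
    have hSinv' : S⁻¹ * S = 1 := nonsing_inv_mul S hSunit
    have hSinvH : (S⁻¹)ᴴ = S⁻¹ := by rw [conjTranspose_nonsing_inv, hSpsd.1]
    set Q : Matrix m m ℂ := S⁻¹ * B * S⁻¹ with hQdef
    have hQpsd : Q.PosSemidef := by
      have := hB.conjTranspose_mul_mul_same (S⁻¹)
      rwa [hSinvH] at this
    have hQS : Q * S = S⁻¹ * B := by
      rw [hQdef, mul_assoc (S⁻¹ * B) (S⁻¹) S, hSinv', mul_one]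
    have hfact : A + B = S * ((1 + Q) * S) := by
      rw [add_mul, one_mul, mul_add, hQS, ← mul_assoc S (S⁻¹) B, hSinv, one_mul, hSS]
    have hdet : (A + B).det = A.det * (1 + Q).det := by
      rw [hfact, det_mul, det_mul]
      rw [← hSS, det_mul]
      ring
    obtain ⟨hQ1, hQ2⟩ := one_le_det_one_add Q hQpsd
    obtain ⟨hAre, hApos⟩ := psd_det_eq_re A hA
    have hre : (A + B).det.re = A.det.re * (1 + Q).det.re := by
      rw [hdet, hAre, hQ2, ← Complex.ofReal_mul]
      simp
    rw [hre]
    nlinarith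
  · rw [h0]
    simpa using (psd_det_eq_re (A + B) (hA.add hB)).2

lemma fischer {l l' : Type*} [Fintype l] [DecidableEq l] [Fintype l'] [DecidableEq l']
    (P : Matrix (l ⊕ l') (l ⊕ l') ℂ) (hP : P.PosSemidef) :
    P.det.re ≤ (P.toBlocks₁₁).det.re * (P.toBlocks₂₂).det.re := by
  set Z := P.toBlocks₁₁ with hZdef
  set W := P.toBlocks₁₂ with hWdef
  set Y := P.toBlocks₂₂ with hYdef
  have h21 : P.toBlocks₂₁ = Wᴴ := by
    ext i j
    have := congrFun (congrFun hP.1 (Sum.inr i)) (Sum.inl j)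
    simpa [hWdef, toBlocks₂₁, toBlocks₁₂, conjTranspose_apply] using this.symm
  have hPB : P = fromBlocks Z W Wᴴ Y := by
    conv_lhs => rw [← fromBlocks_toBlocks P]
    rw [h21]
  have hZ : Z.PosSemidef := hP.submatrix Sum.inl
  have hY : Y.PosSemidef := hP.submatrix Sum.inr
  rcases psd_posdef_or Z hZ with hZd | hZ0
  · haveI : Invertible Z := hZd.isUnit.invertible
    have hdet : P.det = Z.det * (Y - Wᴴ * Z⁻¹ * W).det := by
      rw [hPB, det_fromBlocks₁₁, invOf_eq_nonsing_inv]
    have hSchur : (Y - Wᴴ * Z⁻¹ * W).PosSemidef :=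
      (PosDef.fromBlocks₁₁ W Y hZd).mp (hPB ▸ hP)
    have hS : (Wᴴ * Z⁻¹ * W).PosSemidef :=
      (hZd.inv.posSemidef).conjTranspose_mul_mul_same W
    have hmono := det_re_le_det_re_add _ _ hSchur hS
    rw [sub_add_cancel] at hmono
    obtain ⟨hZre, hZnn⟩ := psd_det_eq_re Z hZd.posSemidef
    obtain ⟨hSre, hSnn⟩ := psd_det_eq_re _ hSchur
    have hre : P.det.re = Z.det.re * (Y - Wᴴ * Z⁻¹ * W).det.re := by
      rw [hdet, hZre, hSre]
      simp
    rw [hre]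
    exact mul_le_mul_of_nonneg_left hmono hZnn
  · obtain ⟨v, hv, hZv⟩ := (Matrix.exists_mulVec_eq_zero_iff).mpr hZ0
    set x : l ⊕ l' → ℂ := Sum.elim v 0 with hx
    have hxne : x ≠ 0 := by
      intro h
      apply hv
      funext i
      exact congrFun h (Sum.inl i)
    have hmv : P *ᵥ x = Sum.elim (0 : l → ℂ) (Wᴴ *ᵥ v) := by
      rw [hPB, hx, fromBlocks_mulVec]
      simp [hZv]
    have hPx0 : star x ⬝ᵥ P *ᵥ x = 0 := by
      rw [hmv, hx]
      simp [dotProduct, Fintype.sum_sum_type]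
    have hdet0 : P.det = 0 :=
      (Matrix.exists_mulVec_eq_zero_iff).mp ⟨x, hxne, (hP.dotProduct_mulVec_zero_iff x).mp hPx0⟩
    rw [hdet0, hZ0]
    simp

end HessAux

open HessAux in
/-- Pointwise comparison between the real Hessian determinant and the complex Hessian
determinant: identifying `ℂⁿ ≅ ℝ^(2n)` (real coordinates indexed by `Fin n ⊕ Fin n`,
`Sum.inl i ↔ x_i`, `Sum.inr i ↔ y_i`), for a `C²` function `u` on the unit ball, at a
point where the real Hessian `∇²u` is negative semidefinite, one has
`|det ∇²u| ≤ 2^(2n) (det(−u_{ij̄}))²`, with `u_{ij̄}` the complex Hessian. -/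
theorem real_det_le_complex_det_sq (n : ℕ) (hn : 1 ≤ n)
    (u : EuclideanSpace ℝ (Fin n ⊕ Fin n) → ℝ)
    (hu : ContDiffOn ℝ 2 u (Metric.ball 0 1))
    (x : EuclideanSpace ℝ (Fin n ⊕ Fin n)) (hx : x ∈ Metric.ball (0 : EuclideanSpace ℝ (Fin n ⊕ Fin n)) 1)
    -- the real Hessian matrix of `u` at `x`
    (H : Matrix (Fin n ⊕ Fin n) (Fin n ⊕ Fin n) ℝ)
    (hH : ∀ a b, H a b =
      iteratedFDeriv ℝ 2 u x ![EuclideanSpace.single a 1, EuclideanSpace.single b 1])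
    -- the complex Hessian matrix `u_{ij̄} = ∂²u/∂z_i∂z̄_j` of `u` at `x`
    (C : Matrix (Fin n) (Fin n) ℂ)
    (hC : ∀ i j, C i j = (1 / 4 : ℂ) *
      (((H (Sum.inl i) (Sum.inl j) + H (Sum.inr i) (Sum.inr j) : ℝ) : ℂ) +
        Complex.I * ((H (Sum.inl i) (Sum.inr j) - H (Sum.inr i) (Sum.inl j) : ℝ) : ℂ)))
    -- `∇²u ≤ 0` at `x`
    (hneg : (-H).PosSemidef) :
    |H.det| ≤ 2 ^ (2 * n) * ((-C).det.re) ^ 2 := by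

  classical
  set M : Matrix (Fin n ⊕ Fin n) (Fin n ⊕ Fin n) ℝ := -H with hM
  obtain ⟨B, hB⟩ := posSemidef_iff_eq_transpose_mul_self.mp hneg
  set Mc : Matrix (Fin n ⊕ Fin n) (Fin n ⊕ Fin n) ℂ := M.map Complex.ofRealHom with hMc
  have hMcPSD : Mc.PosSemidef := by
    have h1 : Mc = (B.map Complex.ofRealHom)ᴴ * (B.map Complex.ofRealHom) := by
      rw [hMc, hB, Matrix.map_mul]
      congr 1
      rw [Matrix.conjTranspose_map]
      intro r
      simp
    rw [h1]
    exact posSemidef_conjTranspose_mul_self _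
  set T : Matrix (Fin n ⊕ Fin n) (Fin n ⊕ Fin n) ℂ :=
    fromBlocks 1 (Complex.I • 1) (Complex.I • 1) 1 with hT
  set N : Matrix (Fin n ⊕ Fin n) (Fin n ⊕ Fin n) ℂ := Tᴴ * Mc * T with hN
  have hNPSD : N.PosSemidef := hMcPSD.conjTranspose_mul_mul_same T
  have hTH : Tᴴ = fromBlocks 1 ((-Complex.I) • 1) ((-Complex.I) • 1) 1 := by
    rw [hT, fromBlocks_conjTranspose]
    simp
  have hNblocks : N = fromBlocks
      (Mc.toBlocks₁₁ + Mc.toBlocks₂₂ + Complex.I • (Mc.toBlocks₁₂ - Mc.toBlocks₂₁))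
      (Mc.toBlocks₁₂ + Complex.I • (Mc.toBlocks₁₁ - Mc.toBlocks₂₂) + Mc.toBlocks₂₁)
      (Mc.toBlocks₂₁ + (-Complex.I) • (Mc.toBlocks₁₁ - Mc.toBlocks₂₂) + Mc.toBlocks₁₂)
      (Mc.toBlocks₁₁ + Mc.toBlocks₂₂ - Complex.I • (Mc.toBlocks₁₂ - Mc.toBlocks₂₁)) := by
    rw [hN, hTH]
    conv_lhs => rw [← fromBlocks_toBlocks Mc]
    rw [fromBlocks_multiply, fromBlocks_multiply]
    rw [Matrix.fromBlocks_inj]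
    refine ⟨?_, ?_, ?_, ?_⟩ <;>
      · simp only [Matrix.smul_mul, Matrix.mul_smul, one_mul, mul_one, smul_smul,
          Complex.I_mul_I, neg_mul, mul_neg, neg_neg, neg_smul, one_smul, smul_sub, smul_add]
        match_scalars <;> simp [Complex.I_sq]
  have hN11 : N.toBlocks₁₁ = (4 : ℂ) • (-C) := by
    rw [hNblocks, toBlocks_fromBlocks₁₁]
    ext i j
    simp only [Matrix.add_apply, Matrix.sub_apply, Matrix.smul_apply, Matrix.neg_apply,
      toBlocks₁₁, toBlocks₁₂, toBlocks₂₁, toBlocks₂₂, of_apply, hMc, Matrix.map_apply, hM,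
      Matrix.neg_apply, smul_eq_mul, Complex.ofRealHom_eq_coe]
    rw [hC i j]
    push_cast
    ring
  have hN22 : N.toBlocks₂₂ = N.toBlocks₁₁.map (starRingEnd ℂ) := by
    rw [hNblocks, toBlocks_fromBlocks₂₂, toBlocks_fromBlocks₁₁]
    ext i j
    simp only [Matrix.add_apply, Matrix.sub_apply, Matrix.smul_apply, Matrix.map_apply,
      toBlocks₁₁, toBlocks₁₂, toBlocks₂₁, toBlocks₂₂, of_apply, hMc, hM, smul_eq_mul, map_add,
      _root_.map_mul, map_sub, Complex.conj_I, Complex.conj_ofReal, Matrix.map_apply,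
      Complex.ofRealHom_eq_coe]
    ring
  -- determinants
  have hdetT : T.det = (2 : ℂ) ^ n := by
    rw [hT, det_fromBlocks_one₁₁]
    have h2 : (1 : Matrix (Fin n) (Fin n) ℂ) - (Complex.I • 1) * (Complex.I • 1)
        = (2 : ℂ) • (1 : Matrix (Fin n) (Fin n) ℂ) := by
      rw [smul_mul_smul_comm, Complex.I_mul_I, mul_one, neg_smul, one_smul, sub_neg_eq_add,
        two_smul]
    rw [h2, det_smul, det_one, mul_one, Fintype.card_fin]
  have hdetTH : Tᴴ.det = (2 : ℂ) ^ n := by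
    rw [det_conjTranspose, hdetT]
    simp
  have hdetMc : Mc.det = ((M.det : ℝ) : ℂ) := by
    rw [hMc]
    exact (RingHom.map_det Complex.ofRealHom M).symm
  have hdetN : N.det.re = 4 ^ n * M.det := by
    rw [hN, det_mul, det_mul, hdetTH, hdetT, hdetMc]
    have : (2 : ℂ) ^ n * ((M.det : ℝ) : ℂ) * (2 : ℂ) ^ n = (((4 : ℝ) ^ n * M.det : ℝ) : ℂ) := by
      push_cast
      rw [show (4 : ℂ) = 2 ^ 2 by norm_num, ← pow_mul, two_mul, pow_add]
      ring
    rw [this, Complex.ofReal_re]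
  have hdetN11 : N.toBlocks₁₁.det.re = 4 ^ n * (-C).det.re := by
    rw [hN11, det_smul, Fintype.card_fin]
    have : ((4 : ℂ) ^ n) = (((4 : ℝ) ^ n : ℝ) : ℂ) := by push_cast; ring
    rw [this, Complex.re_ofReal_mul]
  have hdetN22 : N.toBlocks₂₂.det.re = N.toBlocks₁₁.det.re := by
    have hmd : N.toBlocks₂₂.det = (starRingEnd ℂ) N.toBlocks₁₁.det := by
      rw [hN22]
      exact ((starRingEnd ℂ).map_det N.toBlocks₁₁).symm
    rw [hmd, Complex.conj_re]
  have hfis := fischer N hNPSD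
  rw [hdetN, hdetN11, hdetN22, hdetN11] at hfis
  -- positivity of det M and |H.det| = M.det
  have hMdet_nonneg : 0 ≤ M.det := by
    rw [hB, det_mul, det_conjTranspose]
    simpa using mul_self_nonneg B.det
  have hHdet : |H.det| = M.det := by
    have : M.det = H.det := by
      rw [hM, det_neg, Fintype.card_sum, Fintype.card_fin, ← two_mul, pow_mul]
      norm_num
    rw [← this, abs_of_nonneg hMdet_nonneg]
  rw [hHdet]
  have h4pos : (0 : ℝ) < 4 ^ n := by positivity
  have key : 4 ^ n * M.det ≤ 4 ^ n * (4 ^ n * ((-C).det.re) ^ 2) := by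
    calc 4 ^ n * M.det ≤ 4 ^ n * (-C).det.re * (4 ^ n * (-C).det.re) := hfis
      _ = 4 ^ n * (4 ^ n * ((-C).det.re) ^ 2) := by ring
  have := le_of_mul_le_mul_left (by linarith [key] : 4 ^ n * M.det ≤ 4 ^ n * (4 ^ n * ((-C).det.re) ^ 2)) h4pos
  calc M.det ≤ 4 ^ n * ((-C).det.re) ^ 2 := this
    _ = 2 ^ (2 * n) * ((-C).det.re) ^ 2 := by
      rw [pow_mul]
      norm_num
end
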